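/- For all distinct positive real numbers a and b, I(Q(a,b), G(a,b)) < A(a,b). -/

import Mathlib

noncomputable def A (a b : ℝ) : ℝ := (a + b) / 2
noncomputable def G (a b : ℝ) : ℝ := Real.sqrt (a * b)
noncomputable def Q (a b : ℝ) : ℝ := Real.sqrt ((a ^ 2 + b ^ 2) / 2)
noncomputable def I (a b : ℝ) : ℝ := (1 / Real.exp 1) * (a ^ a / b ^ b) ^ (1 / (a - b))

open Real in
lemma aux_key (y x : ℝ) (hy : 0 < y) (hyx : y < x) :
    x * Real.log x - y * Real.log y < (x - y) * (1 + Real.log ((x + y) / 2)) := by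
  set f : ℝ → ℝ := fun z => z * Real.log z - y * Real.log y -
      (z - y) * (1 + Real.log ((z + y) / 2)) with hf
  have hderiv : ∀ z ∈ Set.Ioi y, HasDerivAt f
      ((Real.log z + 1) - (1 * (1 + Real.log ((z + y) / 2)) +
        (z - y) * ((1 / 2) / ((z + y) / 2)))) z := by
    intro z hz
    have hz0 : 0 < z := lt_trans hy hz
    have hin : HasDerivAt (fun z : ℝ => (z + y) / 2) (1 / 2) z := by
      simpa using ((hasDerivAt_id z).add_const y).div_const 2
    have hlog : HasDerivAt (fun z : ℝ => Real.log ((z + y) / 2))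
        ((1 / 2) / ((z + y) / 2)) z :=
      hin.log (by positivity)
    have h1 : HasDerivAt (fun z : ℝ => z * Real.log z) (Real.log z + 1) z :=
      Real.hasDerivAt_mul_log hz0.ne'
    have h2 : HasDerivAt (fun z : ℝ => (z - y) * (1 + Real.log ((z + y) / 2)))
        (1 * (1 + Real.log ((z + y) / 2)) + (z - y) * ((1 / 2) / ((z + y) / 2))) z := by
      exact ((((hasDerivAt_id z).sub_const y)).mul ((hasDerivAt_const z 1).add hlog)).congr_deriv (by simp only [id, Pi.add_apply]; ring)
    exact (h1.sub_const (y * Real.log y)).sub h2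
  have hneg : ∀ z ∈ Set.Ioi y,
      ((Real.log z + 1) - (1 * (1 + Real.log ((z + y) / 2)) +
        (z - y) * ((1 / 2) / ((z + y) / 2)))) < 0 := by
    intro z hz
    have hz' : y < z := hz
    have hz0 : 0 < z := lt_trans hy hz'
    have hsum : 0 < z + y := by linarith
    have hratio : (z - y) * ((1 / 2) / ((z + y) / 2)) = (z - y) / (z + y) := by
      field_simp
    have hlogdiff : Real.log z - Real.log ((z + y) / 2) = Real.log (z / ((z + y) / 2)) := by
      rw [Real.log_div hz0.ne' (ne_of_gt (by linarith : (0:ℝ) < (z + y) / 2))]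
    have harg : z / ((z + y) / 2) = 1 + (z - y) / (z + y) := by
      field_simp; ring
    have hlt : Real.log (1 + (z - y) / (z + y)) < (z - y) / (z + y) := by
      have h1 : 0 < (z - y) / (z + y) := div_pos (by linarith) hsum
      have := Real.log_lt_sub_one_of_pos (x := 1 + (z - y) / (z + y)) (by linarith)
        (by linarith)
      linarith
    rw [hratio]
    have : Real.log z - Real.log ((z + y) / 2) < (z - y) / (z + y) := by
      rw [hlogdiff, harg]; exact hlt
    linarith
  have hanti : StrictAntiOn f (Set.Ici y) := by
    apply strictAntiOn_of_deriv_neg (convex_Ici y)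
    · apply ContinuousOn.sub
      apply ContinuousOn.sub
      · exact (continuousOn_id.mul (Real.continuousOn_log.comp continuousOn_id
          (fun z hz => ne_of_gt (lt_of_lt_of_le hy hz))))
      · exact continuousOn_const
      · apply ContinuousOn.mul
        · exact (continuousOn_id.sub continuousOn_const)
        · apply ContinuousOn.add continuousOn_const
          apply Real.continuousOn_log.comp ((continuousOn_id.add continuousOn_const).div_const 2)
          intro z hz
          have hyz : y ≤ z := hz
          have : 0 < (z + y) / 2 := by linarith
          simpa using this.ne'
    · intro z hz
      rw [interior_Ici] at hz
      rw [(hderiv z hz).deriv]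
      exact hneg z hz
  have h0 : f y = 0 := by simp [hf]
  have := hanti (Set.self_mem_Ici) (Set.mem_Ici.mpr hyx.le) hyx
  rw [h0] at this
  have : f x < 0 := this
  simp only [hf] at this
  linarith

open Real in
lemma I_lt_A (x y : ℝ) (hy : 0 < y) (hyx : y < x) : I x y < (x + y) / 2 := by
  have hx : 0 < x := lt_trans hy hyx
  have hxy : 0 < x - y := by linarith
  have hxx : x ^ x = Real.exp (Real.log x * x) := Real.rpow_def_of_pos hx x
  have hyy : y ^ y = Real.exp (Real.log y * y) := Real.rpow_def_of_pos hy y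
  have hdiv : x ^ x / y ^ y = Real.exp (Real.log x * x - Real.log y * y) := by
    rw [hxx, hyy, ← Real.exp_sub]
  have hrpow : (x ^ x / y ^ y) ^ (1 / (x - y)) =
      Real.exp ((Real.log x * x - Real.log y * y) * (1 / (x - y))) := by
    rw [hdiv, ← Real.exp_log (x := Real.exp _ ^ _) (by positivity)]
    congr 1
    rw [Real.log_rpow (Real.exp_pos _), Real.log_exp]; ring
  have hI : I x y = Real.exp ((Real.log x * x - Real.log y * y) * (1 / (x - y)) - 1) := by
    rw [I, hrpow, Real.exp_sub]
    field_simp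
  rw [hI]
  have hA : (x + y) / 2 = Real.exp (Real.log ((x + y) / 2)) := by
    rw [Real.exp_log (by positivity)]
  rw [hA, Real.exp_lt_exp]
  have key := aux_key y x hy hyx
  rw [mul_one_div, sub_lt_iff_lt_add, div_lt_iff₀ hxy]
  nlinarith [key]

theorem stmt_11 (a b : ℝ) (ha : 0 < a) (hb : 0 < b) (hab : a ≠ b) :
    I (Q a b) (G a b) < A a b := by
  have hne : a - b ≠ 0 := sub_ne_zero.mpr hab
  have hsq : 0 < (a - b) ^ 2 := by positivity
  have hab2 : a * b < (a ^ 2 + b ^ 2) / 2 := by nlinarith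
  have hG : 0 < G a b := Real.sqrt_pos.mpr (by positivity)
  have hGQ : G a b < Q a b := Real.sqrt_lt_sqrt (by positivity) hab2
  have hQ : 0 < Q a b := lt_trans hG hGQ
  have h1 : I (Q a b) (G a b) < (Q a b + G a b) / 2 := I_lt_A _ _ hG hGQ
  have hG2 : G a b ^ 2 = a * b := Real.sq_sqrt (by positivity)
  have hQ2 : Q a b ^ 2 = (a ^ 2 + b ^ 2) / 2 := Real.sq_sqrt (by positivity)
  have h2 : Q a b + G a b ≤ a + b := by
    nlinarith [sq_nonneg (Q a b - G a b), hQ.le, hG.le]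
  rw [A]
  linarith
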